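/- arXiv:2603.12348 — 6 statements merged into one kernel-verified Lean document; each statement's English description precedes it below -/
import Mathlib

section
/- The Frattini subgroup of the wreathed 2-group W (the intersection of its maximal subgroups) equals the subgroup ⟨a², b², ab⟩ generated by a², b² and ab; this subgroup has index 4 in W, and the quotient W/Φ(W) is isomorphic to C_2 × C_2. -/
namespace Wreathed

/-- The cyclic group of order `2^n`. -/
abbrev C (n : ℕ) : Type := Multiplicative (ZMod (2^n))

/-- The coordinate-swapping automorphism of `C n × C n`. -/
def swapAut (n : ℕ) : MulAut (C n × C n) := MulEquiv.prodComm

lemma swapAut_mul_self (n : ℕ) : swapAut n * swapAut n = 1 := by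
  ext x <;> rfl

lemma two_cases (x : Multiplicative (ZMod 2)) :
    x = 1 ∨ x = Multiplicative.ofAdd 1 := by
  revert x; decide

/-- The action of `C_2` on `C n × C n` by swapping the two coordinates. -/
def act (n : ℕ) : Multiplicative (ZMod 2) →* MulAut (C n × C n) where
  toFun x := if x = 1 then 1 else swapAut n
  map_one' := if_pos rfl
  map_mul' := by
    have h11 : (Multiplicative.ofAdd 1 : Multiplicative (ZMod 2)) *
        Multiplicative.ofAdd 1 = 1 := by decide
    have h1ne : (Multiplicative.ofAdd 1 : Multiplicative (ZMod 2)) ≠ 1 := by decide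
    intro x y
    rcases two_cases x with hx | hx <;> rcases two_cases y with hy | hy <;>
      subst hx <;> subst hy <;>
      simp [h11, h1ne, swapAut_mul_self]

/-- The wreathed 2-group `W = (C_{2^n} × C_{2^n}) ⋊ C_2`,
i.e. the wreath product `Z_{2^n} ≀ Z_2`. -/
abbrev W (n : ℕ) : Type := (C n × C n) ⋊[act n] (Multiplicative (ZMod 2))

/-- The element `a = ((g,1); 0)`. -/
def a (n : ℕ) : W n := SemidirectProduct.inl (Multiplicative.ofAdd 1, 1)

/-- The element `b = ((1,g); 0)`. -/
def b (n : ℕ) : W n := SemidirectProduct.inl (1, Multiplicative.ofAdd 1)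

/-- The element `t = ((1,1); 1)`. -/
def t (n : ℕ) : W n := SemidirectProduct.inr (Multiplicative.ofAdd 1)

/-- The base subgroup `A = ⟨a, b⟩`. -/
def A (n : ℕ) : Subgroup (W n) := Subgroup.closure {a n, b n}

/-- The diagonal `Δ = ⟨ab⟩`. -/
def diag (n : ℕ) : Subgroup (W n) := Subgroup.zpowers (a n * b n)

/-- The anti-diagonal `Δ⁻ = ⟨ab⁻¹⟩`. -/
def antidiag (n : ℕ) : Subgroup (W n) := Subgroup.zpowers (a n * (b n)⁻¹)

end Wreathed

namespace WAux
open Wreathed Subgroup Multiplicative SemidirectProduct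

variable (n : ℕ) (hn : n ≠ 0)

/-- The sum-of-coordinates mod 2 map. -/
def F : C n × C n →* Multiplicative (ZMod 2) where
  toFun p := Multiplicative.ofAdd
    (ZMod.castHom (dvd_pow_self 2 hn) (ZMod 2) (p.1.toAdd + p.2.toAdd))
  map_one' := by simp
  map_mul' p q := by
    rw [← ofAdd_add]
    simp only [Prod.fst_mul, Prod.snd_mul, toAdd_mul, map_add]
    ring_nf

lemma F_swap (p : C n × C n) : F n hn (swapAut n p) = F n hn p := by
  have : (swapAut n p) = (p.2, p.1) := rfl
  rw [this]
  simp only [F, MonoidHom.coe_mk, OneHom.coe_mk]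
  rw [add_comm]

/-- The abelianization-like map `W n → C₂ × C₂`. -/
def phi : W n →* Multiplicative (ZMod 2) × Multiplicative (ZMod 2) :=
  SemidirectProduct.lift ((F n hn).prod 1) ((1 : Multiplicative (ZMod 2) →* Multiplicative (ZMod 2)).prod (MonoidHom.id _))
    (by
      intro g
      ext p
      · show F n hn ((act n g) p) = _
        rcases two_cases g with hg | hg <;> subst hg
        · simp only [map_one]
          simp [MulAut.conj_apply, mul_comm]; rfl
        · have hact : (act n) (Multiplicative.ofAdd 1) = swapAut n := by
            have h1ne : (Multiplicative.ofAdd 1 : Multiplicative (ZMod 2)) ≠ 1 := by decide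
            simp [act, h1ne]
          rw [hact, F_swap]
          simp [MulAut.conj_apply, mul_comm]; rfl
      · simp [MulAut.conj_apply, mul_comm])

lemma phi_apply (w : W n) : phi n hn w = (F n hn w.left, w.right) := by
  have : phi n hn w = ((F n hn).prod 1) w.left *
      ((1 : Multiplicative (ZMod 2) →* Multiplicative (ZMod 2)).prod (MonoidHom.id _)) w.right := rfl
  rw [this]
  simp [MonoidHom.prod_apply]


lemma a_pow (m : ℕ) : a n ^ m = inl (ofAdd ((m : ZMod (2^n))), 1) := by
  rw [a, ← map_pow]
  congr 1
  rw [Prod.pow_mk, one_pow, ← ofAdd_nsmul, nsmul_eq_mul, mul_one]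

lemma b_pow (m : ℕ) : b n ^ m = inl (1, ofAdd ((m : ZMod (2^n)))) := by
  rw [b, ← map_pow]
  congr 1
  rw [Prod.pow_mk, one_pow, ← ofAdd_nsmul, nsmul_eq_mul, mul_one]

lemma ab_eq : a n * b n = inl (ofAdd 1, ofAdd 1) := by
  rw [a, b, ← map_mul, Prod.mk_mul_mk, mul_one, one_mul]

lemma ab_pow (m : ℕ) : (a n * b n) ^ m = inl (ofAdd ((m : ZMod (2^n))), ofAdd ((m : ZMod (2^n)))) := by
  rw [ab_eq, ← map_pow]
  congr 1
  rw [Prod.pow_mk, ← ofAdd_nsmul, nsmul_eq_mul, mul_one]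

lemma at_sq : (a n * t n) ^ 2 = a n * b n := by
  have h1ne : (Multiplicative.ofAdd 1 : Multiplicative (ZMod 2)) ≠ 1 := by decide
  have hact : (act n) (Multiplicative.ofAdd 1) = swapAut n := by simp [act, h1ne]
  have h11 : (Multiplicative.ofAdd 1 : Multiplicative (ZMod 2)) *
      Multiplicative.ofAdd 1 = 1 := by decide
  have hat : a n * t n = ⟨(ofAdd 1, 1), Multiplicative.ofAdd 1⟩ := by
    rw [a, t, ← mk_eq_inl_mul_inr]
  rw [pow_two, hat, mul_def, hact]
  show (⟨((ofAdd 1 : C n), (1 : C n)) * ((1 : C n), (ofAdd 1 : C n)),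
      Multiplicative.ofAdd 1 * Multiplicative.ofAdd 1⟩ : W n) = _
  rw [Prod.mk_mul_mk, mul_one, one_mul, h11, ab_eq]
  rfl

lemma phi_surjective : Function.Surjective (phi n hn) := by
  haveI : NeZero (2^n) := ⟨(pow_pos (by norm_num) n).ne'⟩
  rintro ⟨p, q⟩
  refine ⟨⟨(Multiplicative.ofAdd ((p.toAdd.val : ℕ) : ZMod (2^n)), 1), q⟩, ?_⟩
  rw [phi_apply]
  refine Prod.ext ?_ rfl
  show F n hn (Multiplicative.ofAdd ((p.toAdd.val : ℕ) : ZMod (2^n)), 1) = p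
  simp only [F, MonoidHom.coe_mk, OneHom.coe_mk, toAdd_ofAdd, toAdd_one, add_zero,
    map_natCast]
  rw [ZMod.natCast_rightInverse p.toAdd, ofAdd_toAdd]

lemma ker_phi : (phi n hn).ker = closure {a n ^ 2, b n ^ 2, a n * b n} := by
  haveI : NeZero (2^n) := ⟨(pow_pos (by norm_num) n).ne'⟩
  have hcast2 : (ZMod.castHom (dvd_pow_self 2 hn) (ZMod 2)) (2 : ZMod (2^n)) = 0 := by
    have : ((2:ℕ) : ZMod (2^n)) = (2 : ZMod (2^n)) := by norm_cast
    rw [← this, map_natCast]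
    decide
  apply le_antisymm
  · -- ker ≤ closure
    intro w hw
    rw [MonoidHom.mem_ker, phi_apply, Prod.mk_eq_one] at hw
    obtain ⟨hF, hr⟩ := hw
    set u : ZMod (2^n) := w.left.1.toAdd with hu
    set v : ZMod (2^n) := w.left.2.toAdd with hv
    have hsum : (ZMod.castHom (dvd_pow_self 2 hn) (ZMod 2)) (u + v) = 0 := by
      have : F n hn w.left = ofAdd ((ZMod.castHom (dvd_pow_self 2 hn) (ZMod 2)) (u + v)) := rfl
      rw [this] at hF
      exact ofAdd_eq_one.mp hF
    have hcsub : (ZMod.castHom (dvd_pow_self 2 hn) (ZMod 2)) (v - u) = 0 := by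
      have hrw : v - u = (u + v) - 2 * u := by ring
      rw [hrw, map_sub, hsum, map_mul, hcast2, zero_mul, sub_zero]
    have hdvd : 2 ∣ (v - u).val := by
      rw [← ZMod.natCast_eq_zero_iff]
      rw [ZMod.natCast_val] at *
      rwa [ZMod.castHom_apply] at hcsub
    obtain ⟨k, hk⟩ := hdvd
    have hw_eq : w = (a n * b n) ^ u.val * (b n ^ 2) ^ k := by
      rw [ab_pow, ← pow_mul, b_pow, ← map_mul, Prod.mk_mul_mk, mul_one]
      rw [← hk]
      have h1 : ((u.val : ℕ) : ZMod (2^n)) = u := ZMod.natCast_rightInverse u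
      have h2 : (((v-u).val : ℕ) : ZMod (2^n)) = v - u := ZMod.natCast_rightInverse (v - u)
      rw [h1, h2, ← ofAdd_add]
      have h3 : u + (v - u) = v := by ring
      rw [h3]
      have hleft : w.left = (ofAdd u, ofAdd v) := by
        refine Prod.ext ?_ ?_ <;> simp [hu, hv]
      conv_lhs => rw [← inl_left_mul_inr_right w]
      rw [hr, map_one, mul_one, hleft]
    rw [hw_eq]
    exact mul_mem
      (pow_mem (subset_closure (by simp)) _)
      (pow_mem (subset_closure (by simp)) _)
  · -- closure ≤ ker
    rw [closure_le]
    rintro x (rfl | rfl | rfl) <;> rw [SetLike.mem_coe, MonoidHom.mem_ker]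
    · rw [a_pow, phi_apply]
      refine Prod.ext ?_ rfl
      show F n hn _ = 1
      simp only [F, MonoidHom.coe_mk, OneHom.coe_mk, left_inl, toAdd_ofAdd, toAdd_one, add_zero]
      rw [show ((2:ℕ) : ZMod (2^n)) = (2 : ZMod (2^n)) by norm_cast] at *
      rw [hcast2]
      rfl
    · rw [b_pow, phi_apply]
      refine Prod.ext ?_ rfl
      show F n hn _ = 1
      simp only [F, MonoidHom.coe_mk, OneHom.coe_mk, left_inl, toAdd_ofAdd, toAdd_one, zero_add]
      rw [show ((2:ℕ) : ZMod (2^n)) = (2 : ZMod (2^n)) by norm_cast] at *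
      rw [hcast2]
      rfl
    · rw [ab_eq, phi_apply]
      refine Prod.ext ?_ rfl
      show F n hn _ = 1
      simp only [F, MonoidHom.coe_mk, OneHom.coe_mk, left_inl, toAdd_ofAdd]
      rw [show (1 : ZMod (2^n)) + 1 = (2 : ZMod (2^n)) by ring, hcast2]
      rfl

end WAux

section GenAux
open Subgroup


lemma isCoatom_of_index_two {G : Type*} [Group G] {M : Subgroup G} (h : M.index = 2) :
    IsCoatom M := by
  constructor
  · rintro rfl
    rw [Subgroup.index_top] at h
    omega
  · intro N hMN
    have hdvd : N.index ∣ 2 := h ▸ Subgroup.index_dvd_of_le hMN.le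
    rcases Nat.prime_two.eq_one_or_self_of_dvd _ hdvd with h1 | h2
    · exact Subgroup.index_eq_one.mp h1
    · exfalso
      have hrel : M.relIndex N * N.index = M.index := Subgroup.relIndex_mul_index hMN.le
      rw [h, h2] at hrel
      have h1 : M.relIndex N = 1 := by omega
      exact hMN.not_ge (Subgroup.relIndex_eq_one.mp h1)

lemma index_eq_two_of_isCoatom {G : Type*} [Group G] [Finite G] (hG : IsPGroup 2 G)
    {M : Subgroup G} (hM : IsCoatom M) [hMn : M.Normal] : M.index = 2 := by
  haveI : Fact (Nat.Prime 2) := ⟨Nat.prime_two⟩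
  obtain ⟨g, hg⟩ : ∃ g, g ∉ M := by
    by_contra hc; push_neg at hc; exact hM.1 ((Subgroup.eq_top_iff' M).mpr hc)
  have hQ2 : IsPGroup 2 (G ⧸ M) := hG.to_quotient M
  obtain ⟨m, hm⟩ := IsPGroup.iff_card.mp hQ2
  have hgne : (QuotientGroup.mk g : G ⧸ M) ≠ 1 := by
    simpa [QuotientGroup.eq_one_iff] using hg
  have hcard_ne : Nat.card (G ⧸ M) ≠ 1 := by
    intro h1
    haveI : Subsingleton (G ⧸ M) := Nat.card_eq_one_iff_unique.mp h1 |>.1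
    exact hgne (Subsingleton.elim _ _)
  have h2dvd : 2 ∣ Nat.card (G ⧸ M) := by
    rcases Nat.eq_zero_or_pos m with rfl | hm'
    · simp at hm; omega
    · rw [hm]; exact dvd_pow_self 2 hm'.ne'
  obtain ⟨q, hq⟩ := exists_prime_orderOf_dvd_card' (G := G ⧸ M) 2 h2dvd
  -- zpowers q = ⊤
  obtain ⟨x, hx⟩ := QuotientGroup.mk'_surjective M q
  have hxN : x ∈ comap (QuotientGroup.mk' M) (zpowers q) := by
    simp [Subgroup.mem_comap, hx, Subgroup.mem_zpowers]
  have hMle : M ≤ comap (QuotientGroup.mk' M) (zpowers q) := by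
    intro y hy
    have : QuotientGroup.mk' M y = 1 := by
      simpa [QuotientGroup.ker_mk'] using hy
    simp [Subgroup.mem_comap, this, Subgroup.one_mem]
  have hne : M ≠ comap (QuotientGroup.mk' M) (zpowers q) := by
    intro he
    have hxM : x ∈ M := he ▸ hxN
    have : QuotientGroup.mk' M x = 1 := by
      simpa [QuotientGroup.eq_one_iff] using hxM
    rw [hx] at this
    rw [this] at hq
    simp at hq
  have htop : comap (QuotientGroup.mk' M) (zpowers q) = ⊤ :=
    hM.2 _ (lt_of_le_of_ne hMle hne)
  have hz : zpowers q = ⊤ := by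
    have := Subgroup.map_comap_eq_self_of_surjective
      (QuotientGroup.mk'_surjective M) (zpowers q)
    rw [htop] at this
    rw [← this, Subgroup.map_top_of_surjective _ (QuotientGroup.mk'_surjective M)]
  have : Nat.card (G ⧸ M) = 2 := by
    rw [← Subgroup.card_top, ← hz, Nat.card_zpowers, hq]
  exact this

lemma sq_mem_of_isCoatom {G : Type*} [Group G] [Finite G] (hG : IsPGroup 2 G)
    {M : Subgroup G} (hM : IsCoatom M) (x : G) : x ^ 2 ∈ M := by
  haveI : Fact (Nat.Prime 2) := ⟨Nat.prime_two⟩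
  haveI : Group.IsNilpotent G := hG.isNilpotent
  haveI hMn : M.Normal :=
    NormalizerCondition.normal_of_coatom M normalizerCondition_of_isNilpotent hM
  have h2 := index_eq_two_of_isCoatom hG hM
  have := M.pow_index_mem x
  rwa [h2] at this

end GenAux

namespace WAuxMain
open Wreathed Subgroup Multiplicative SemidirectProduct WAux

variable (n : ℕ)

/-- `W n` is in bijection with a product. -/
def eqv : W n ≃ (C n × C n) × Multiplicative (ZMod 2) :=
  ⟨fun w => (w.left, w.right), fun p => ⟨p.1, p.2⟩, fun _ => rfl, fun _ => rfl⟩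

end WAuxMain

open Wreathed WAux WAuxMain Subgroup Multiplicative in
/-- The Frattini subgroup of the wreathed 2-group equals `⟨a², b², ab⟩`; it has index 4,
and the quotient `W/Φ(W)` is isomorphic to `C_2 × C_2`. -/
theorem frattini_wreathed (n : ℕ) (hn : 2 ≤ n) :
    frattini (W n) = Subgroup.closure {a n ^ 2, b n ^ 2, a n * b n} ∧
      (frattini (W n)).index = 4 ∧
      Nonempty ((W n ⧸ frattini (W n)) ≃*
        (Multiplicative (ZMod 2) × Multiplicative (ZMod 2))) := by
  have hn0 : n ≠ 0 := by omega
  haveI : NeZero (2^n) := ⟨(pow_pos (by norm_num) n).ne'⟩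
  haveI : Finite (W n) := Finite.of_equiv _ (eqv n).symm
  have hC : Nat.card (C n) = 2 ^ n := by
    rw [Nat.card_congr (Multiplicative.toAdd (α := ZMod (2^n))), Nat.card_zmod]
  have h2 : Nat.card (Multiplicative (ZMod 2)) = 2 := by
    rw [Nat.card_congr (Multiplicative.toAdd (α := ZMod 2)), Nat.card_zmod]
  have hcard : Nat.card (W n) = 2 ^ (n + n + 1) := by
    rw [Nat.card_congr (eqv n), Nat.card_prod, Nat.card_prod, hC, h2, pow_add, pow_add, pow_one]
  have hp : IsPGroup 2 (W n) := IsPGroup.of_card hcard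
  have hsurj := phi_surjective n hn0
  -- frattini = ker phi
  have hker := ker_phi n hn0
  have hfr : frattini (W n) = (phi n hn0).ker := by
    apply le_antisymm
    · -- frattini ≤ ker
      set f1 := (MonoidHom.fst (Multiplicative (ZMod 2)) (Multiplicative (ZMod 2))).comp (phi n hn0)
      set f2 := (MonoidHom.snd (Multiplicative (ZMod 2)) (Multiplicative (ZMod 2))).comp (phi n hn0)
      have hs1 : Function.Surjective f1 := by
        rw [MonoidHom.coe_comp]
        exact Prod.fst_surjective.comp hsurj
      have hs2 : Function.Surjective f2 := by
        rw [MonoidHom.coe_comp]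
        exact Prod.snd_surjective.comp hsurj
      have hi1 : f1.ker.index = 2 := by
        rw [Subgroup.index_ker, MonoidHom.range_eq_top.mpr hs1, Subgroup.card_top, h2]
      have hi2 : f2.ker.index = 2 := by
        rw [Subgroup.index_ker, MonoidHom.range_eq_top.mpr hs2, Subgroup.card_top, h2]
      intro x hx
      have hx1 : x ∈ f1.ker := frattini_le_coatom (isCoatom_of_index_two hi1) hx
      have hx2 : x ∈ f2.ker := frattini_le_coatom (isCoatom_of_index_two hi2) hx
      rw [MonoidHom.mem_ker] at hx1 hx2 ⊢
      exact Prod.ext hx1 hx2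
    · -- ker ≤ frattini
      rw [hker]
      have : closure {a n ^ 2, b n ^ 2, a n * b n} ≤
          ⨅ M ∈ {H : Subgroup (W n) | IsCoatom H}, M := by
        apply le_iInf₂
        intro M hM
        rw [closure_le]
        rintro x (rfl | rfl | rfl)
        · exact sq_mem_of_isCoatom hp hM (a n)
        · exact sq_mem_of_isCoatom hp hM (b n)
        · rw [SetLike.mem_coe, ← at_sq]
          exact sq_mem_of_isCoatom hp hM (a n * t n)
      exact this
  refine ⟨hfr.trans hker, ?_, ?_⟩
  · rw [hfr, Subgroup.index_ker, MonoidHom.range_eq_top.mpr hsurj, Subgroup.card_top,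
      Nat.card_prod, h2]
  · exact ⟨(QuotientGroup.quotientMulEquivOfEq hfr).trans
      (QuotientGroup.quotientKerEquivOfSurjective (phi n hn0) hsurj)⟩
end

section
/- Every abelian subgroup H of the wreathed 2-group W that is not contained in the base subgroup A satisfies |H| ≤ 2^{n+1}; consequently A is the unique abelian subgroup of W of order 2^{2n}. -/
namespace WreathedAux

open Wreathed SemidirectProduct Multiplicative

variable (n : ℕ)

instance : NeZero (2 ^ n) := ⟨pow_ne_zero n two_ne_zero⟩

instance : Finite (W n) := by
  refine Finite.of_injective (fun w : W n => (w.left, w.right)) ?_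
  intro x y h
  rw [Prod.ext_iff] at h
  exact SemidirectProduct.ext h.1 h.2

lemma gen_pow (u : C n) :
    (ofAdd (1 : ZMod (2 ^ n))) ^ (toAdd u).val = u := by
  rw [← ofAdd_nsmul, nsmul_eq_mul, mul_one, ZMod.natCast_rightInverse (toAdd u)]
  rfl

lemma rightHom_eq (x : W n) : (rightHom : W n →* Multiplicative (ZMod 2)) x = x.right := rfl

lemma hab : a n * b n = inl (ofAdd 1, ofAdd 1) := by
  rw [a, b, ← map_mul, Prod.mk_mul_mk, mul_one, one_mul]

lemma inl_fst_mem (u : C n) : (inl (u, 1) : W n) ∈ A n := by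
  have h : (inl (u, 1) : W n) = (a n) ^ (toAdd u).val := by
    rw [a, ← map_pow, Prod.pow_mk, one_pow, gen_pow]
  rw [h]
  exact Subgroup.pow_mem _ (Subgroup.subset_closure (by simp)) _

lemma inl_snd_mem (u : C n) : (inl (1, u) : W n) ∈ A n := by
  have h : (inl (1, u) : W n) = (b n) ^ (toAdd u).val := by
    rw [b, ← map_pow, Prod.pow_mk, one_pow, gen_pow]
  rw [h]
  exact Subgroup.pow_mem _ (Subgroup.subset_closure (by simp)) _

lemma A_eq_ker : A n = (rightHom : W n →* Multiplicative (ZMod 2)).ker := by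
  apply le_antisymm
  · rw [A, Subgroup.closure_le]
    rintro x (rfl | rfl) <;>
      simp only [SetLike.mem_coe, MonoidHom.mem_ker, a, b, rightHom_inl]
  · intro x hx
    have hr : x.right = 1 := hx
    have hx' : x = inl x.left := by
      conv_lhs => rw [← inl_left_mul_inr_right x]
      rw [hr, map_one, mul_one]
    have hsplit : x.left = (x.left.1, 1) * (1, x.left.2) := by
      rw [Prod.mk_mul_mk, mul_one, one_mul]
    rw [hx', hsplit, map_mul]
    exact mul_mem (inl_fst_mem n _) (inl_snd_mem n _)

lemma card_diag : Nat.card (diag n) = 2 ^ n := by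
  rw [diag, Nat.card_zpowers, hab, orderOf_injective _ inl_injective, Prod.orderOf,
    Nat.lcm_self]
  show orderOf (ofAdd (1 : ZMod (2 ^ n))) = 2 ^ n
  rw [orderOf_ofAdd_eq_addOrderOf, ZMod.addOrderOf_one]

lemma diag_mem (u : C n) : (inl (u, u) : W n) ∈ diag n := by
  rw [diag, Subgroup.mem_zpowers_iff]
  refine ⟨((toAdd u).val : ℤ), ?_⟩
  rw [zpow_natCast, hab, ← map_pow, Prod.pow_mk, gen_pow]

lemma act_ofAdd_one : act n (ofAdd 1) = swapAut n := by
  show (if (ofAdd 1 : Multiplicative (ZMod 2)) = 1 then 1 else swapAut n) = swapAut n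
  rw [if_neg (by decide)]

lemma inf_le_diag {H : Subgroup (W n)} (hc : IsMulCommutative ↥H) {w : W n}
    (hw : w ∈ H) (hw' : w ∉ A n) : H ⊓ A n ≤ diag n := by
  haveI := hc
  rintro h ⟨hH, hA⟩
  have hr : h.right = 1 := by rw [A_eq_ker] at hA; exact hA
  have hwr : w.right = ofAdd 1 := by
    rcases two_cases w.right with h1 | h1
    · exact absurd ((A_eq_ker n) ▸ (show w ∈ _ from h1) : w ∈ A n) hw'
    · exact h1
  have hcomm := Subgroup.mul_comm_of_mem_isMulCommutative H hH hw
  have hl := congrArg SemidirectProduct.left hcomm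
  rw [mul_left, mul_left, hr, hwr, map_one, MulAut.one_apply, act_ofAdd_one] at hl
  rw [mul_comm] at hl
  have heq : h.left = swapAut n h.left := mul_left_cancel hl
  have hfs : h.left.1 = h.left.2 := (congrArg Prod.snd heq).symm
  have hx' : h = inl h.left := by
    conv_lhs => rw [← inl_left_mul_inr_right h]
    rw [hr, map_one, mul_one]
  have : h.left = (h.left.1, h.left.1) := by
    rw [Prod.ext_iff]; exact ⟨rfl, hfs.symm⟩
  rw [hx', this]
  exact diag_mem n _

lemma card_le_of_not_le (H : Subgroup (W n)) (hc : IsMulCommutative ↥H) (hnle : ¬ H ≤ A n) :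
    Nat.card H ≤ 2 ^ (n + 1) := by
  obtain ⟨w, hwH, hwA⟩ := SetLike.not_le_iff_exists.mp hnle
  have hinf : H ⊓ A n ≤ diag n := inf_le_diag n hc hwH hwA
  have h1 : Nat.card ↥(H ⊓ A n) ≤ 2 ^ n := by
    calc Nat.card ↥(H ⊓ A n) ≤ Nat.card (diag n) := Subgroup.card_le_of_le hinf
    _ = 2 ^ n := card_diag n
  set f := (rightHom : W n →* Multiplicative (ZMod 2)).comp H.subtype with hf
  have hker : f.ker = (A n).subgroupOf H := by
    rw [A_eq_ker]; rfl
  have hcard : Nat.card H = Nat.card f.range * Nat.card f.ker := by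
    rw [← Nat.card_congr (QuotientGroup.quotientKerEquivRange f).toEquiv]
    exact Subgroup.card_eq_card_quotient_mul_card_subgroup f.ker
  have h2 : Nat.card f.range ≤ 2 := by
    have h := Subgroup.card_le_card_group (G := Multiplicative (ZMod 2)) f.range
    rwa [show Nat.card (Multiplicative (ZMod 2)) = 2 from Nat.card_zmod 2] at h
  have h3 : Nat.card f.ker ≤ 2 ^ n := by
    rw [hker, ← Subgroup.inf_subgroupOf_right,
      Nat.card_congr (Subgroup.subgroupOfEquivOfLe inf_le_right).toEquiv, inf_comm]
    exact h1
  calc Nat.card H = Nat.card f.range * Nat.card f.ker := hcard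
    _ ≤ 2 * 2 ^ n := Nat.mul_le_mul h2 h3
    _ = 2 ^ (n + 1) := (pow_succ' 2 n).symm

lemma card_A : Nat.card (A n) = 2 ^ (2 * n) := by
  rw [A_eq_ker, ← range_inl_eq_ker_rightHom,
    ← Nat.card_congr (MonoidHom.ofInjective (inl_injective (φ := act n))).toEquiv]
  show Nat.card (C n × C n) = 2 ^ (2 * n)
  rw [Nat.card_prod]
  rw [show Nat.card (C n) = 2 ^ n from Nat.card_zmod (2 ^ n), two_mul, pow_add]

end WreathedAux

open Wreathed WreathedAux in
/-- Every abelian subgroup of the wreathed 2-group not contained in the base subgroup `A`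
has order at most `2^{n+1}`; consequently `A` is the unique abelian subgroup
of order `2^{2n}`. -/
theorem abelian_subgroups_wreathed (n : ℕ) (hn : 2 ≤ n) :
    (∀ H : Subgroup (W n), IsMulCommutative ↥H → ¬ H ≤ A n →
        Nat.card ↥H ≤ 2 ^ (n + 1)) ∧
      (∀ H : Subgroup (W n), IsMulCommutative ↥H → Nat.card ↥H = 2 ^ (2 * n) → H = A n) := by
  constructor
  · exact fun H hc hnle => card_le_of_not_le n H hc hnle
  · intro H hc hcard
    have hle : H ≤ A n := by
      by_contra hnle
      have h := card_le_of_not_le n H hc hnle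
      rw [hcard] at h
      have : n + 1 < 2 * n := by omega
      exact absurd (lt_of_lt_of_le (pow_lt_pow_right₀ one_lt_two this) h) (lt_irrefl _)
    exact Subgroup.eq_of_le_of_card_ge hle (by rw [hcard, card_A])
end

section
/- The quotient of the wreathed 2-group W by its center is isomorphic to the dihedral group of order 2^{n+1}: W/Z(W) ≅ D_{2^{n+1}}. -/
namespace Wreathed

lemma act_one' (n : ℕ) : act n 1 = 1 := (act n).map_one

lemma act_of (n : ℕ) : act n (Multiplicative.ofAdd 1) = swapAut n := by
  simp [act]

lemma swapAut_apply {n : ℕ} (p : C n × C n) : swapAut n p = p.swap := rfl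

/-- The projection to the dihedral group. -/
def toDihedral (n : ℕ) : W n →* DihedralGroup (2 ^ n) where
  toFun w := if w.right = 1 then .r (w.left.2.toAdd - w.left.1.toAdd)
    else .sr (w.left.1.toAdd - w.left.2.toAdd)
  map_one' := by simp [DihedralGroup.one_def, -DihedralGroup.r_zero]
  map_mul' := by
    intro x y
    have hx : (x * y).left = x.left * act n x.right y.left := rfl
    have hr : (x * y).right = x.right * y.right := rfl
    have h1ne : (Multiplicative.ofAdd 1 : Multiplicative (ZMod 2)) ≠ 1 := by decide
    have h11 : (Multiplicative.ofAdd 1 : Multiplicative (ZMod 2)) *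
        Multiplicative.ofAdd 1 = 1 := by decide
    rcases two_cases x.right with hxr | hxr <;> rcases two_cases y.right with hyr | hyr <;>
      simp only [hx, hr, hxr, hyr, one_mul, mul_one, h11, h1ne, if_pos rfl, if_neg h1ne,
        act_one', act_of, MulAut.one_apply, if_true, if_false] <;>
      simp only [swapAut_apply, Prod.fst_mul, Prod.snd_mul, Prod.fst_swap,
        Prod.snd_swap, toAdd_mul, DihedralGroup.r_mul_r, DihedralGroup.r_mul_sr,
        DihedralGroup.sr_mul_r, DihedralGroup.sr_mul_sr] <;>
      congr 1 <;> ring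

lemma center_eq_ker (n : ℕ) (hn : 2 ≤ n) :
    Subgroup.center (W n) = (toDihedral n).ker := by
  have hone : (1 : ZMod (2^n)) ≠ 0 := by
    haveI : Fact (1 < 2^n) := ⟨by
      calc 1 < 2^2 := by norm_num
           _ ≤ 2^n := Nat.pow_le_pow_right (by norm_num) hn⟩
    exact one_ne_zero
  have h1ne : (Multiplicative.ofAdd 1 : Multiplicative (ZMod 2)) ≠ 1 := by decide
  ext z
  constructor
  · intro hz
    rw [Subgroup.mem_center_iff] at hz
    -- first, z.right = 1
    have ha := hz (a n)
    have hzr : z.right = 1 := by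
      rcases two_cases z.right with h | h
      · exact h
      · exfalso
        have h1 : (a n * z).left = (a n).left * z.left := by
          show (a n).left * act n (a n).right z.left = _
          simp [a, act_one']
        have h2 : (z * a n).left = z.left * swapAut n (a n).left := by
          show z.left * act n z.right (a n).left = _
          rw [h, act_of]
        have hfst : (Multiplicative.ofAdd (1 : ZMod (2^n))) * z.left.1 = z.left.1 * 1 := by
          have := congrArg (fun w : W n => w.left.1) ha
          simp only [h1, h2] at this
          simpa [a, h, act_of, swapAut_apply] using this
        rw [mul_one] at hfst
        have heq : Multiplicative.ofAdd (1 : ZMod (2^n)) = 1 :=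
          mul_right_cancel (hfst.trans (one_mul z.left.1).symm)
        exact hone (by simpa using congrArg Multiplicative.toAdd heq)
    have ht := hz (t n)
    have hdiag : z.left.1 = z.left.2 := by
      have h1 : (t n * z).left = swapAut n z.left := by
        show (t n).left * act n (t n).right z.left = _
        rw [show (t n).right = Multiplicative.ofAdd 1 from rfl, act_of]
        simp [t]
      have h2 : (z * t n).left = z.left := by
        show z.left * act n z.right (t n).left = _
        rw [hzr, act_one']
        simp [t]
      have := congrArg (fun w => (SemidirectProduct.left w).1) ht
      simp only [h1, h2, swapAut_apply, Prod.fst_swap] at this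
      exact this.symm
    show (if z.right = 1 then _ else _) = 1
    rw [if_pos hzr, hdiag, sub_self]
    exact (DihedralGroup.one_def).symm
  · intro hz
    have hz' : (if z.right = 1 then DihedralGroup.r (z.left.2.toAdd - z.left.1.toAdd)
        else DihedralGroup.sr (z.left.1.toAdd - z.left.2.toAdd)) = 1 := hz
    rcases two_cases z.right with h | h
    · rw [if_pos h, DihedralGroup.one_def] at hz'
      have hd : z.left.2.toAdd - z.left.1.toAdd = 0 := by
        injection hz'
      have hdg : z.left.1 = z.left.2 := by
        have : z.left.2.toAdd = z.left.1.toAdd := by linear_combination hd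
        exact (Multiplicative.toAdd.injective this).symm
      rw [Subgroup.mem_center_iff]
      intro w
      have hL : (w * z).left = (z * w).left := by
        show w.left * act n w.right z.left = z.left * act n z.right w.left
        rw [h, act_one', MulAut.one_apply]
        rcases two_cases w.right with hw | hw <;> rw [hw]
        · rw [act_one', MulAut.one_apply, mul_comm]
        · rw [act_of, swapAut_apply]
          have : z.left.swap = z.left := by
            ext <;> simp [Prod.swap, hdg]
          rw [this, mul_comm]
      have hR : (w * z).right = (z * w).right := by
        show w.right * z.right = z.right * w.right
        rw [mul_comm]
      exact SemidirectProduct.ext hL hR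
    · rw [if_neg (h ▸ h1ne)] at hz'
      exact absurd hz' (by simp [DihedralGroup.one_def, -DihedralGroup.r_zero])

lemma toDihedral_surjective (n : ℕ) : Function.Surjective (toDihedral n) := by
  intro d
  rcases d with i | i
  · refine ⟨⟨(1, Multiplicative.ofAdd i), 1⟩, ?_⟩
    show (if (1 : Multiplicative (ZMod 2)) = 1 then DihedralGroup.r (Multiplicative.toAdd (Multiplicative.ofAdd i) - Multiplicative.toAdd (1 : C n)) else DihedralGroup.sr (Multiplicative.toAdd (1 : C n) - Multiplicative.toAdd (Multiplicative.ofAdd i))) = _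
    simp [toDihedral, -SemidirectProduct.mk_eq_inl_mul_inr]
  · refine ⟨⟨(Multiplicative.ofAdd i, 1), Multiplicative.ofAdd 1⟩, ?_⟩
    have : (Multiplicative.ofAdd (1 : ZMod 2)) ≠ 1 := by decide
    show (if (Multiplicative.ofAdd 1 : Multiplicative (ZMod 2)) = 1 then DihedralGroup.r (Multiplicative.toAdd (1 : C n) - Multiplicative.toAdd (Multiplicative.ofAdd i)) else DihedralGroup.sr (Multiplicative.toAdd (Multiplicative.ofAdd i) - Multiplicative.toAdd (1 : C n))) = _
    simp [toDihedral, this, -SemidirectProduct.mk_eq_inl_mul_inr]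


end Wreathed

open Wreathed in
/-- The quotient of the wreathed 2-group by its center is dihedral of order `2^{n+1}`. -/
theorem wreathed_quotient_center_dihedral (n : ℕ) (hn : 2 ≤ n) :
    Nonempty ((W n ⧸ Subgroup.center (W n)) ≃* DihedralGroup (2 ^ n)) := by
  exact ⟨(QuotientGroup.quotientMulEquivOfEq (center_eq_ker n hn)).trans
    (QuotientGroup.quotientKerEquivOfSurjective _ (toDihedral_surjective n))⟩
end

section
/- In the wreathed 2-group W, for every element w ∈ W with w ∉ A, the centralizer of w in the base subgroup A equals the diagonal: C_A(w) = Δ = ⟨ab⟩. -/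
namespace Wreathed

open SemidirectProduct

lemma ofAdd_eq_pow (n : ℕ) (x : C n) :
    x = (Multiplicative.ofAdd (1 : ZMod (2^n)))^(x.toAdd.val) := by
  have hne : NeZero (2^n) := ⟨pow_ne_zero n two_ne_zero⟩
  have : ((x.toAdd.val : ℕ) : ZMod (2^n)) = x.toAdd := by
    rw [ZMod.natCast_val, ZMod.cast_id]
  rw [← ofAdd_toAdd x, ← this, ← ofAdd_nsmul]
  congr 1
  simp [nsmul_eq_mul]

lemma a_pow (n : ℕ) (k : ℕ) :
    (a n)^k = SemidirectProduct.inl ((Multiplicative.ofAdd (1 : ZMod (2^n)))^k, 1) := by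
  rw [a, ← map_pow]; congr 1; simp [Prod.pow_def]

lemma b_pow (n : ℕ) (k : ℕ) :
    (b n)^k = SemidirectProduct.inl (1, (Multiplicative.ofAdd (1 : ZMod (2^n)))^k) := by
  rw [b, ← map_pow]; congr 1; simp [Prod.pow_def]

lemma inl_mem_A (n : ℕ) (p : C n × C n) : SemidirectProduct.inl p ∈ A n := by
  have h : (SemidirectProduct.inl p : W n)
      = (a n)^(p.1.toAdd.val) * (b n)^(p.2.toAdd.val) := by
    rw [a_pow, b_pow, ← map_mul]
    congr 1
    rw [Prod.mk_mul_mk, mul_one, one_mul, ← ofAdd_eq_pow, ← ofAdd_eq_pow]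
  rw [h]
  exact mul_mem (pow_mem (Subgroup.subset_closure (by simp)) _)
    (pow_mem (Subgroup.subset_closure (by simp)) _)

lemma mem_A_iff (n : ℕ) (z : W n) : z ∈ A n ↔ z.right = 1 := by
  constructor
  · intro hz
    refine Subgroup.closure_induction ?_ ?_ ?_ ?_ hz
    · rintro x (rfl | rfl) <;> rfl
    · rfl
    · intro x y _ _ hx hy; rw [mul_right, hx, hy, mul_one]
    · intro x _ hx; rw [inv_right, hx, inv_one]
  · intro hz
    obtain ⟨l, r⟩ := z
    simp only at hz
    subst hz
    exact inl_mem_A n l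

lemma ab_eq (n : ℕ) : a n * b n = SemidirectProduct.inl
    (Multiplicative.ofAdd (1 : ZMod (2^n)), Multiplicative.ofAdd (1 : ZMod (2^n))) := by
  rw [a, b, ← map_mul, Prod.mk_mul_mk, mul_one, one_mul]

lemma mem_diag_iff (n : ℕ) (z : W n) :
    z ∈ diag n ↔ z.right = 1 ∧ z.left.1 = z.left.2 := by
  constructor
  · rintro ⟨k, rfl⟩
    simp only [ab_eq, ← map_zpow]
    exact ⟨right_inl _, by rw [left_inl]; rfl⟩
  · rintro ⟨h1, h2⟩
    refine ⟨(z.left.1.toAdd.val : ℤ), ?_⟩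
    show (a n * b n)^((z.left.1.toAdd.val : ℤ)) = z
    rw [zpow_natCast]
    have : (a n * b n)^(z.left.1.toAdd.val) = SemidirectProduct.inl
        ((Multiplicative.ofAdd (1 : ZMod (2^n)))^(z.left.1.toAdd.val),
         (Multiplicative.ofAdd (1 : ZMod (2^n)))^(z.left.1.toAdd.val)) := by
      rw [ab_eq, ← map_pow, Prod.pow_def]
    rw [this]
    obtain ⟨l, r⟩ := z
    simp only at h1 h2
    subst h1
    show _ = SemidirectProduct.inl l
    congr 1
    exact Prod.ext (by simpa using (ofAdd_eq_pow n l.1).symm)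
      (by simp only []; rw [← h2]; simpa using (ofAdd_eq_pow n l.1).symm)

lemma act_ofAdd_one (n : ℕ) (p : C n × C n) :
    act n (Multiplicative.ofAdd 1) p = (p.2, p.1) := by
  have h1ne : (Multiplicative.ofAdd 1 : Multiplicative (ZMod 2)) ≠ 1 := by decide
  show (if (Multiplicative.ofAdd 1 : Multiplicative (ZMod 2)) = 1 then (1 : MulAut _)
      else swapAut n) p = _
  rw [if_neg h1ne]; rfl

end Wreathed

open Wreathed in
/-- In the wreathed 2-group, for every `w ∉ A`, the centralizer of `w` in the base
subgroup `A` is the diagonal: `C_A(w) = Δ = ⟨ab⟩`. -/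
theorem centralizer_outside_base (n : ℕ) (hn : 2 ≤ n) :
    ∀ w : W n, w ∉ A n → A n ⊓ Subgroup.centralizer {w} = diag n := by
  intro w hw
  have hwr : w.right = Multiplicative.ofAdd 1 := by
    rcases two_cases w.right with h | h
    · exact absurd ((mem_A_iff n w).mpr h) hw
    · exact h
  ext z
  rw [Subgroup.mem_inf, mem_A_iff, Subgroup.mem_centralizer_singleton_iff, mem_diag_iff]
  constructor
  · rintro ⟨h1, h2⟩
    refine ⟨h1, ?_⟩
    have hl := congrArg SemidirectProduct.left h2
    rw [SemidirectProduct.mul_left, SemidirectProduct.mul_left, h1, hwr, map_one,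
      MulAut.one_apply, act_ofAdd_one] at hl
    rw [mul_comm] at hl
    have heq : z.left = (z.left.2, z.left.1) := mul_left_cancel hl
    exact congrArg Prod.fst heq
  · rintro ⟨h1, h2⟩
    refine ⟨h1, ?_⟩
    refine SemidirectProduct.ext ?_ ?_
    · rw [SemidirectProduct.mul_left, SemidirectProduct.mul_left, h1, hwr, map_one,
        MulAut.one_apply, act_ofAdd_one]
      have h3 : (z.left.2, z.left.1) = z.left := Prod.ext h2.symm h2
      rw [h3, mul_comm]
    · rw [SemidirectProduct.mul_right, SemidirectProduct.mul_right, h1, mul_one, one_mul]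
end

section
/- In the wreathed 2-group W, let D = ⟨ab⁻¹, t⟩. Then D is isomorphic to the dihedral group of order 2^{n+1}, the center of D is ⟨(ab⁻¹)^{2^{n-1}}⟩ of order 2, and the centralizer of D in W equals the diagonal: C_W(D) = Δ = Z(W). -/
namespace WreathedAux
open Wreathed Multiplicative SemidirectProduct DihedralGroup

variable {n : ℕ}

lemma ofAdd_inj' {α : Type*} {x y : α} :
    Multiplicative.ofAdd x = Multiplicative.ofAdd y ↔ x = y := Iff.rfl

lemma tau_ne_one : (Multiplicative.ofAdd (1:ZMod 2)) ≠ 1 := by decide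
lemma tau_mul_tau : (Multiplicative.ofAdd (1:ZMod 2)) * ofAdd 1 = 1 := by decide

lemma act_tau (p : C n × C n) : act n (ofAdd 1) p = (p.2, p.1) := by
  show (if (ofAdd (1:ZMod 2)) = 1 then (1:MulAut (C n × C n)) else swapAut n) p = _
  rw [if_neg tau_ne_one]; rfl

lemma act_one' (p : C n × C n) : act n 1 p = p := by rw [map_one]; rfl

lemma mk_mul (p q : C n × C n) (x y : Multiplicative (ZMod 2)) :
    (⟨p, x⟩ * ⟨q, y⟩ : W n) = ⟨p * act n x q, x * y⟩ := rfl

lemma s_def : a n * (b n)⁻¹ = (⟨(ofAdd 1, ofAdd (-1)), 1⟩ : W n) := by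
  show a n * (b n)⁻¹ = SemidirectProduct.inl (ofAdd 1, ofAdd (-1))
  rw [a, b, ← map_inv, ← map_mul]
  congr 1
  simp [Prod.ext_iff, ofAdd_neg]

lemma t_def : t n = (⟨(1, 1), ofAdd 1⟩ : W n) := rfl

/-- The embedding of the dihedral group, as a bare function. -/
def fFun : DihedralGroup (2^n) → W n
  | .r i => ⟨(ofAdd i, ofAdd (-i)), 1⟩
  | .sr i => ⟨(ofAdd (-i), ofAdd i), ofAdd 1⟩

lemma fFun_mul (x y : DihedralGroup (2^n)) : fFun (x * y) = fFun x * fFun y := by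
  rcases x with i | i <;> rcases y with j | j <;>
    simp only [r_mul_r, r_mul_sr, sr_mul_r, sr_mul_sr, fFun, mk_mul, act_one', act_tau,
      tau_mul_tau, one_mul, mul_one, Prod.mk_mul_mk, ← ofAdd_add, SemidirectProduct.ext_iff,
      Prod.mk.injEq, ofAdd_inj'] <;>
    exact ⟨⟨by grind, by grind⟩, by trivial⟩

/-- The embedding of the dihedral group. -/
def F : DihedralGroup (2^n) →* W n where
  toFun := fFun
  map_one' := by simp [fFun, one_def, -r_zero, SemidirectProduct.ext_iff]
  map_mul' := fFun_mul

lemma F_injective : Function.Injective (F (n := n)) := by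
  intro x y h
  rcases x with i | i <;> rcases y with j | j <;>
    simp only [F, MonoidHom.coe_mk, OneHom.coe_mk, fFun, SemidirectProduct.ext_iff,
      Prod.mk.injEq, ofAdd_inj'] at h
  · exact congrArg r h.1.1
  · exact absurd h.2 (Ne.symm tau_ne_one)
  · exact absurd h.2 tau_ne_one
  · exact congrArg sr h.1.2

lemma dih_top : (⊤ : Subgroup (DihedralGroup (2^n))) = Subgroup.closure {r 1, sr 0} := by
  refine le_antisymm ?_ le_top
  rintro (i | i) -
  · have : r i = r (1:ZMod (2^n)) ^ i.val := by rw [r_one_pow, ZMod.natCast_val, ZMod.cast_id]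
    rw [this]
    exact pow_mem (Subgroup.subset_closure (by simp)) _
  · have : sr i = sr 0 * r (1:ZMod (2^n)) ^ i.val := by
      rw [r_one_pow, sr_mul_r, zero_add, ZMod.natCast_val, ZMod.cast_id]
    rw [this]
    exact mul_mem (Subgroup.subset_closure (by simp))
      (pow_mem (Subgroup.subset_closure (by simp)) _)

lemma F_r_one : F (n:=n) (.r 1) = a n * (b n)⁻¹ := by rw [s_def]; rfl

lemma F_sr_zero : F (n:=n) (.sr 0) = t n := by
  rw [t_def]; show (⟨(ofAdd (-0), ofAdd 0), ofAdd 1⟩ : W n) = _; norm_num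

lemma F_range : (F (n := n)).range = Subgroup.closure {a n * (b n)⁻¹, t n} := by
  rw [MonoidHom.range_eq_map, dih_top, MonoidHom.map_closure]
  congr 1
  rw [Set.image_pair, F_r_one, F_sr_zero]

lemma s_pow (m : ℕ) : (a n * (b n)⁻¹) ^ m = F (n:=n) (.r (m : ZMod (2^n))) := by
  rw [← F_r_one, ← map_pow, r_one_pow]

lemma mem_D_iff {x : W n} :
    x ∈ (Subgroup.closure {a n * (b n)⁻¹, t n} : Subgroup (W n)) ↔
      ∃ i : ZMod (2^n), x = F (n:=n) (.r i) ∨ x = F (n:=n) (.sr i) := by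
  rw [← F_range]
  constructor
  · rintro ⟨d, rfl⟩
    rcases d with i | i
    · exact ⟨i, Or.inl rfl⟩
    · exact ⟨i, Or.inr rfl⟩
  · rintro ⟨i, rfl | rfl⟩ <;> exact ⟨_, rfl⟩

/-- The diagonal consists of the elements `((x,x);0)`. -/
lemma mem_diag_iff {x : W n} : x ∈ diag n ↔ x.left.1 = x.left.2 ∧ x.right = 1 := by
  have hab : a n * b n = SemidirectProduct.inl (ofAdd 1, ofAdd 1) := by
    rw [a, b, ← map_mul]; congr 1; simp [Prod.ext_iff]
  have habz : ∀ k : ℤ, (a n * b n) ^ k =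
      SemidirectProduct.inl ((ofAdd (1:ZMod (2^n))) ^ k, (ofAdd (1:ZMod (2^n))) ^ k) := by
    intro k
    rw [hab, ← map_zpow]
    congr 1
  constructor
  · rintro ⟨k, rfl⟩
    simp only [habz]
    exact ⟨rfl, rfl⟩
  · rintro ⟨h1, h2⟩
    obtain ⟨⟨u, v⟩, e⟩ := x
    simp only at h1 h2
    subst h1 h2
    refine ⟨((toAdd u).val : ℤ), ?_⟩
    have : (ofAdd (1:ZMod (2^n))) ^ (((toAdd u).val : ℕ) : ℤ) = u := by
      rw [zpow_natCast, ← ofAdd_nsmul]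
      simp [ZMod.natCast_val, ZMod.cast_id]
    simp only [habz, this]
    rfl

lemma mem_centralizer_iff' (x : W n) :
    x ∈ Subgroup.centralizer ((Subgroup.closure {a n * (b n)⁻¹, t n} : Subgroup (W n)) :
        Set (W n)) ↔
      (a n * (b n)⁻¹) * x = x * (a n * (b n)⁻¹) ∧ t n * x = x * t n := by
  rw [Subgroup.mem_centralizer_iff]
  constructor
  · intro hx
    exact ⟨hx _ (Subgroup.subset_closure (by simp)), hx _ (Subgroup.subset_closure (by simp))⟩
  · rintro ⟨h1, h2⟩ g hg
    have hle : (Subgroup.closure {a n * (b n)⁻¹, t n} : Subgroup (W n)) ≤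
        Subgroup.centralizer {x} := by
      rw [Subgroup.closure_le]
      rintro y hy
      show y ∈ Subgroup.centralizer {x}
      rw [Subgroup.mem_centralizer_iff]
      rintro z rfl
      rcases hy with rfl | rfl
      · exact h1.symm
      · exact h2.symm
    have := hle hg
    rw [Subgroup.mem_centralizer_iff] at this
    exact (this x rfl).symm

lemma two_ne_zero' (hn : 2 ≤ n) : (2 : ZMod (2^n)) ≠ 0 := by
  have : ((2:ℕ) : ZMod (2^n)) ≠ 0 := by
    rw [Ne, ZMod.natCast_eq_zero_iff]
    intro h
    have := Nat.le_of_dvd (by norm_num) h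
    have : 4 ≤ 2^n := by
      calc 4 = 2^2 := by norm_num
      _ ≤ 2^n := Nat.pow_le_pow_right (by norm_num) hn
    omega
  simpa using this

/-- The concrete description of the centralizer of `D` in `W`. -/
lemma centralizer_char (hn : 2 ≤ n) (x : W n) :
    x ∈ Subgroup.centralizer ((Subgroup.closure {a n * (b n)⁻¹, t n} : Subgroup (W n)) :
        Set (W n)) ↔ x.left.1 = x.left.2 ∧ x.right = 1 := by
  rw [mem_centralizer_iff']
  obtain ⟨⟨u, v⟩, e⟩ := x
  rw [s_def, t_def]
  rcases two_cases e with rfl | rfl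
  · simp only [mk_mul, act_one', act_tau, one_mul, mul_one, Prod.mk_mul_mk,
      SemidirectProduct.ext_iff, Prod.mk.injEq]
    constructor
    · rintro ⟨-, ⟨-, h⟩, -⟩; exact ⟨h, trivial⟩
    · rintro ⟨h, -⟩; exact ⟨⟨⟨mul_comm _ _, mul_comm _ _⟩, trivial⟩, ⟨h.symm, h⟩, trivial⟩
  · simp only [mk_mul, act_one', act_tau, one_mul, mul_one, Prod.mk_mul_mk,
      SemidirectProduct.ext_iff, Prod.mk.injEq]
    constructor
    · rintro ⟨⟨⟨h1, -⟩, -⟩, -⟩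
      exfalso; apply two_ne_zero' hn
      have h2 := congrArg Multiplicative.toAdd h1
      simp only [toAdd_mul, toAdd_ofAdd] at h2
      linear_combination h2
    · rintro ⟨-, h2⟩; exact absurd h2 tau_ne_one

lemma centralizer_eq_diag (hn : 2 ≤ n) :
    Subgroup.centralizer ((Subgroup.closure {a n * (b n)⁻¹, t n} : Subgroup (W n)) :
        Set (W n)) = diag n := by
  ext x
  rw [centralizer_char hn, mem_diag_iff]

lemma diag_eq_center (hn : 2 ≤ n) : diag n = Subgroup.center (W n) := by
  refine le_antisymm ?_ ?_
  · intro x hx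
    rw [mem_diag_iff] at hx
    obtain ⟨⟨u, v⟩, e⟩ := x
    obtain ⟨h1, h2⟩ := hx
    simp only at h1 h2
    subst h1 h2
    rw [Subgroup.mem_center_iff]
    rintro ⟨q, eps⟩
    have hq : act n eps (u, u) = (u, u) := by
      rcases two_cases eps with rfl | rfl
      · rw [act_one']
      · rw [act_tau]
    rw [mk_mul, mk_mul, act_one', hq]
    congr 1
    · exact mul_comm _ _
    · exact mul_comm _ _
  · calc Subgroup.center (W n)
        ≤ Subgroup.centralizer ((Subgroup.closure {a n * (b n)⁻¹, t n} : Subgroup (W n)) :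
            Set (W n)) := Subgroup.center_le_centralizer _
      _ = diag n := centralizer_eq_diag hn

lemma half_pow_cast (hn : 2 ≤ n) :
    -((2^(n-1) : ℕ) : ZMod (2^n)) = ((2^(n-1) : ℕ) : ZMod (2^n)) := by
  have h : (((2^(n-1) : ℕ) + (2^(n-1) : ℕ) : ℕ) : ZMod (2^n)) = 0 := by
    rw [ZMod.natCast_eq_zero_iff]
    apply dvd_of_eq
    rw [← two_mul, ← pow_succ']
    congr 1
    omega
  rw [Nat.cast_add] at h
  linear_combination -h

lemma half_ne_zero (hn : 2 ≤ n) : ((2^(n-1) : ℕ) : ZMod (2^n)) ≠ 0 := by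
  rw [Ne, ZMod.natCast_eq_zero_iff]
  intro h
  have := Nat.le_of_dvd (Nat.pow_pos (by norm_num)) h
  have h2 : 2^(n-1) < 2^n := Nat.pow_lt_pow_right (by norm_num) (by omega)
  omega

lemma sol_two_torsion (hn : 2 ≤ n) (i : ZMod (2^n)) (h : i = -i) :
    i = 0 ∨ i = ((2^(n-1):ℕ):ZMod (2^n)) := by
  have h2 : (2^n : ℕ) ∣ 2 * i.val := by
    have : ((2 * i.val : ℕ) : ZMod (2^n)) = 0 := by
      push_cast [ZMod.natCast_val, ZMod.cast_id]
      linear_combination h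
    exact (ZMod.natCast_eq_zero_iff _ _).mp this
  have hpow : 2^n = 2 * 2^(n-1) := by
    rw [← pow_succ']; congr 1; omega
  obtain ⟨c, hc⟩ := h2
  have hv : i.val = 2^(n-1) * c := by
    refine Nat.eq_of_mul_eq_mul_left (by norm_num : 0 < 2) ?_
    rw [← mul_assoc, ← hpow]; exact hc
  have hlt : i.val < 2^n := ZMod.val_lt i
  have hp : 0 < 2^(n-1) := Nat.pow_pos (by norm_num)
  have hlt2 : 2^(n-1)*c < 2*2^(n-1) := by rw [← hv, ← hpow]; exact hlt
  have hcle : c < 2 := by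
    by_contra hcon
    push_neg at hcon
    have : 2^(n-1)*2 ≤ 2^(n-1)*c := Nat.mul_le_mul_left _ hcon
    omega
  have hc2 : c = 0 ∨ c = 1 := by omega
  rcases hc2 with rfl | rfl
  · left; rw [← ZMod.natCast_zmod_val i, hv]; simp
  · right; rw [← ZMod.natCast_zmod_val i, hv]; simp

/-- The central element `z = s^(2^(n-1))`. -/
lemma z_eq : (a n * (b n)⁻¹) ^ 2 ^ (n-1) = F (n:=n) (.r ((2^(n-1):ℕ) : ZMod (2^n))) :=
  s_pow _

lemma r_cast_zero : F (n:=n) (.r 0) = 1 := by rw [← one_def, map_one]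

lemma z_sq : ((a n * (b n)⁻¹) ^ 2 ^ (n-1)) ^ 2 = (1 : W n) := by
  rw [← pow_mul, s_pow]
  have hd : (2^n : ℕ) ∣ 2^(n-1) * 2 := by
    rcases Nat.eq_zero_or_pos n with rfl | hp
    · simp
    · apply dvd_of_eq
      rw [← pow_succ]
      congr 1
      omega
  have h0 : ((2^(n-1) * 2 : ℕ) : ZMod (2^n)) = 0 :=
    (ZMod.natCast_eq_zero_iff _ _).mpr hd
  rw [h0, r_cast_zero]

lemma z_ne_one (hn : 2 ≤ n) : (a n * (b n)⁻¹) ^ 2 ^ (n-1) ≠ (1 : W n) := by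
  rw [z_eq, ← r_cast_zero]
  intro h
  have := F_injective h
  rw [r.injEq] at this
  exact half_ne_zero hn this

lemma order_z (hn : 2 ≤ n) : orderOf ((a n * (b n)⁻¹) ^ 2 ^ (n-1)) = 2 :=
  orderOf_eq_prime (z_sq) (z_ne_one hn)

end WreathedAux

open Wreathed in
/-- Let `D = ⟨ab⁻¹, t⟩` in the wreathed 2-group. Then `D` is dihedral of order `2^{n+1}`,
`Z(D) = ⟨(ab⁻¹)^{2^{n-1}}⟩` has order 2, and `C_W(D) = Δ = Z(W)`. -/
theorem dihedral_subgroup_wreathed (n : ℕ) (hn : 2 ≤ n) :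
    Nonempty (↥(Subgroup.closure {a n * (b n)⁻¹, t n} : Subgroup (W n)) ≃*
        DihedralGroup (2 ^ n)) ∧
      (Subgroup.closure {a n * (b n)⁻¹, t n} : Subgroup (W n)) ⊓
          Subgroup.centralizer (Subgroup.closure {a n * (b n)⁻¹, t n} : Set (W n))
        = Subgroup.zpowers ((a n * (b n)⁻¹) ^ 2 ^ (n - 1)) ∧
      Nat.card ↥(Subgroup.zpowers ((a n * (b n)⁻¹) ^ 2 ^ (n - 1))) = 2 ∧
      Subgroup.centralizer (Subgroup.closure {a n * (b n)⁻¹, t n} : Set (W n)) = diag n ∧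
      diag n = Subgroup.center (W n) := by
  refine ⟨⟨(MulEquiv.subgroupCongr WreathedAux.F_range.symm).trans
      (MonoidHom.ofInjective WreathedAux.F_injective).symm⟩, ?_, ?_,
    WreathedAux.centralizer_eq_diag hn, WreathedAux.diag_eq_center hn⟩
  · refine le_antisymm ?_ ?_
    · intro x hx
      rw [Subgroup.mem_inf] at hx
      obtain ⟨hD, hc⟩ := hx
      rw [WreathedAux.mem_D_iff] at hD
      rw [WreathedAux.centralizer_char hn] at hc
      obtain ⟨i, rfl | rfl⟩ := hD
      · have hi : i = -i := hc.1
        rcases WreathedAux.sol_two_torsion hn i hi with rfl | rfl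
        · rw [WreathedAux.r_cast_zero]
          exact one_mem _
        · rw [← WreathedAux.z_eq]
          exact Subgroup.mem_zpowers _
      · exact absurd hc.2 WreathedAux.tau_ne_one
    · rw [Subgroup.zpowers_le, Subgroup.mem_inf]
      constructor
      · exact pow_mem (Subgroup.subset_closure (by simp)) _
      · rw [WreathedAux.centralizer_char hn, WreathedAux.z_eq]
        exact ⟨congrArg Multiplicative.ofAdd (WreathedAux.half_pow_cast hn).symm, rfl⟩
  · rw [Nat.card_zpowers]
    exact WreathedAux.order_z hn
end

section
/- Let G be a minimal counterexample as in the context. Then the Frattini subgroup Φ(G) of G (the intersection of all maximal subgroups of G) is a 2-group: every element of Φ(G) has order a power of 2. -/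
/-- The subgroup of inner automorphisms of `G`, i.e. `Inn(G)` inside `Aut(G)`. -/
def innAut (G : Type*) [Group G] : Subgroup (MulAut G) :=
  (MulAut.conj : G →* MulAut G).range

instance innAut_normal (G : Type*) [Group G] : (innAut G).Normal := by
  constructor
  intro x hx f
  obtain ⟨g, rfl⟩ := hx
  refine ⟨f g, ?_⟩
  ext y
  simp only [MulAut.conj_apply, MulAut.mul_apply, map_mul, map_inv,
    MulEquiv.apply_symm_apply, MulAut.inv_def]

/-- An automorphism is class-preserving if it maps every element to a conjugate. -/
def IsClassPreserving {G : Type*} [Group G] (φ : MulAut G) : Prop :=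
  ∀ x : G, IsConj x (φ x)

/-- An automorphism is a Coleman automorphism if its restriction to every Sylow subgroup
is induced by conjugation by a group element. -/
def IsColeman {G : Type*} [Group G] (φ : MulAut G) : Prop :=
  ∀ (p : ℕ), p.Prime → ∀ P : Sylow p G, ∃ y : G,
    ∀ u ∈ (P : Subgroup G), φ u = y⁻¹ * u * y

/-- The subgroup `Aut_c(G)` of class-preserving automorphisms. -/
def autC (G : Type*) [Group G] : Subgroup (MulAut G) where
  carrier := {φ | IsClassPreserving φ}
  one_mem' := fun x => by simpa using IsConj.refl x
  mul_mem' := by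
    intro φ ψ hφ hψ x
    exact (hψ x).trans (hφ (ψ x))
  inv_mem' := by
    intro φ hφ x
    have := (hφ (φ⁻¹ x)).symm
    simpa using this

/-- The subgroup `Aut_Col(G)` of Coleman automorphisms. -/
def autCol (G : Type*) [Group G] : Subgroup (MulAut G) where
  carrier := {φ | IsColeman φ}
  one_mem' := fun p hp P => ⟨1, fun u _ => by simp⟩
  mul_mem' := by
    intro φ ψ hφ hψ p hp P
    obtain ⟨y, hy⟩ := hψ p hp P
    obtain ⟨z, hz⟩ := hφ p hp (y⁻¹ • P)
    refine ⟨y * z, fun u hu => ?_⟩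
    have hmem : ψ u ∈ ((y⁻¹ • P : Sylow p G) : Subgroup G) := by
      rw [Sylow.coe_subgroup_smul, Subgroup.mem_pointwise_smul_iff_inv_smul_mem]
      have : (MulAut.conj y⁻¹)⁻¹ • (ψ u) = u := by
        rw [hy u hu]
        simp [MulAut.smul_def, mul_assoc]
      rw [this]; exact hu
    have h2 := hz _ hmem
    calc (φ * ψ) u = φ (ψ u) := rfl
      _ = z⁻¹ * (ψ u) * z := h2
      _ = (y * z)⁻¹ * u * (y * z) := by rw [hy u hu]; group
  inv_mem' := by
    intro φ hφ p hp P
    obtain ⟨z, hz⟩ := hφ p hp (φ⁻¹ • P)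
    refine ⟨z⁻¹, fun u hu => ?_⟩
    have hmem : φ⁻¹ u ∈ ((φ⁻¹ • P : Sylow p G) : Subgroup G) := by
      rw [Sylow.pointwise_smul_def, Subgroup.mem_pointwise_smul_iff_inv_smul_mem]
      have : (φ⁻¹)⁻¹ • (φ⁻¹ u) = u := by
        simp [MulAut.smul_def]
      rw [this]; exact hu
    have h2 := hz _ hmem
    have : u = z⁻¹ * (φ⁻¹ u) * z := by
      conv_lhs => rw [show u = φ (φ⁻¹ u) by simp]
      exact h2
    rw [show (φ⁻¹ : MulAut G) u = (z⁻¹)⁻¹ * ((z⁻¹ * (φ⁻¹ u) * z) * z⁻¹) from by group]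
    rw [← this]; group

/-- The image `Out_c(G)` of `Aut_c(G)` in `Out(G) = Aut(G)/Inn(G)`. -/
def outC (G : Type*) [Group G] : Subgroup (MulAut G ⧸ innAut G) :=
  (autC G).map (QuotientGroup.mk' (innAut G))

/-- The image `Out_Col(G)` of `Aut_Col(G)` in `Out(G) = Aut(G)/Inn(G)`. -/
def outCol (G : Type*) [Group G] : Subgroup (MulAut G ⧸ innAut G) :=
  (autCol G).map (QuotientGroup.mk' (innAut G))

/-- A group has wreathed Sylow 2-subgroups if its Sylow 2-subgroups are isomorphic to
the wreathed 2-group `(C_{2^n} × C_{2^n}) ⋊ C_2` for some `n ≥ 2`. -/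
def HasWreathedSylow2 (G : Type*) [Group G] : Prop :=
  ∃ n : ℕ, 2 ≤ n ∧ ∀ P : Sylow 2 G, Nonempty ((P : Subgroup G) ≃* Wreathed.W n)


section AuxLemmas

open Subgroup Pointwise

variable {G : Type*} [Group G]




lemma aux_subgroup_eq_of_le_of_card_le [Finite G] {H K : Subgroup G} (h : H ≤ K)
    (hc : Nat.card K ≤ Nat.card H) : H = K := by
  apply SetLike.coe_injective
  apply Set.eq_of_subset_of_ncard_le h
  rwa [← Nat.card_coe_set_eq, ← Nat.card_coe_set_eq]

lemma aux_pgroup_eq_of_le [Finite G] {p : ℕ} (hp : p.Prime) {H K : Subgroup G} (hHK : H ≤ K)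
    (hK : IsPGroup p K) (hind : ¬ p ∣ H.index) : H = K := by
  haveI : Fact p.Prime := ⟨hp⟩
  obtain ⟨b, hb⟩ := hK.exists_card_eq
  have h1 : Nat.card K ∣ Nat.card H * H.index := by
    rw [Subgroup.card_mul_index]
    exact Subgroup.card_subgroup_dvd_card K
  have hcop : Nat.Coprime (p ^ b) H.index :=
    Nat.Coprime.pow_left _ (hp.coprime_iff_not_dvd.mpr hind)
  have h2 : Nat.card K ∣ Nat.card H := by
    rw [hb] at h1 ⊢
    exact hcop.dvd_of_dvd_mul_right h1
  exact aux_subgroup_eq_of_le_of_card_le hHK (Nat.le_of_dvd Nat.card_pos h2)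

lemma aux_map_conj_smul {G' : Type*} [Group G'] (f : G →* G') (c : G) (H : Subgroup G) :
    (MulAut.conj c • H).map f = MulAut.conj (f c) • (H.map f) := by
  rw [Subgroup.pointwise_smul_def, Subgroup.pointwise_smul_def]
  erw [Subgroup.map_map, Subgroup.map_map]
  congr 1
  ext y
  simp [MulAut.conj_apply, map_mul, map_inv]



lemma aux_dvd_odd_two_pow {d N k : ℕ} (hodd : Odd N) (h1 : d ∣ N) (h2 : d ∣ 2 ^ k) : d = 1 := by
  obtain ⟨j, _, rfl⟩ := (Nat.dvd_prime_pow Nat.prime_two).mp h2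
  cases j with
  | zero => simp
  | succ i =>
    exfalso
    have h3 : 2 ∣ N := dvd_trans (dvd_pow_self 2 (Nat.succ_ne_zero i)) h1
    rw [Nat.odd_iff] at hodd
    obtain ⟨m, rfl⟩ := h3
    omega



lemma aux_fixed_point {α : Type*} [Finite α] (hodd : Odd (Nat.card α)) (f : α → α) (v : ℕ)
    (hf : ∀ a, f^[2 ^ v] a = a) : ∃ a, f a = a := by
  classical
  have hbij : Function.Bijective f := by
    have hleft : Function.LeftInverse (f^[2 ^ v - 1]) f := by
      intro a
      have h1 : f^[2 ^ v - 1] (f a) = f^[2 ^ v - 1 + 1] a :=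
        (Function.iterate_succ_apply f (2 ^ v - 1) a).symm
      rw [h1, Nat.sub_add_cancel (Nat.one_le_two_pow), hf]
    have hright : Function.RightInverse (f^[2 ^ v - 1]) f := by
      intro a
      have h1 : f (f^[2 ^ v - 1] a) = f^[2 ^ v - 1 + 1] a :=
        (Function.iterate_succ_apply' f (2 ^ v - 1) a).symm
      rw [h1, Nat.sub_add_cancel (Nat.one_le_two_pow), hf]
    exact ⟨hleft.injective, hright.surjective⟩
  set σ : Equiv.Perm α := Equiv.ofBijective f hbij with hσ
  have hσpow : ∀ (n : ℕ) (a : α), (σ ^ n) a = f^[n] a := by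
    intro n
    induction n with
    | zero => intro a; simp
    | succ n ih =>
      intro a
      rw [pow_succ, Equiv.Perm.mul_apply, Function.iterate_succ_apply]
      exact ih (f a)
  have hσ1 : σ ^ (2 ^ v) = 1 := by
    ext a
    simp [hσpow, hf a]
  set P2 : Subgroup (Equiv.Perm α) := Subgroup.zpowers σ with hP2
  have hpg : IsPGroup 2 P2 := by
    intro g
    refine ⟨v, ?_⟩
    obtain ⟨i, hi⟩ := g.2
    apply Subtype.ext
    push_cast
    have : ((g : Equiv.Perm α)) = σ ^ i := hi.symm
    rw [this, ← zpow_natCast, ← zpow_mul, mul_comm, zpow_mul, zpow_natCast, hσ1, one_zpow]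
  letI : MulAction P2 α := MulAction.compHom α P2.subtype
  have hsmul : ∀ (g : P2) (a : α), g • a = (g : Equiv.Perm α) a := fun _ _ => rfl
  have hmod := hpg.card_modEq_card_fixedPoints α
  have hfix_odd : Odd (Nat.card (MulAction.fixedPoints P2 α)) := by
    rw [Nat.odd_iff] at hodd ⊢
    rw [Nat.ModEq] at hmod
    rw [← hmod]
    exact hodd
  have hne : Nat.card (MulAction.fixedPoints P2 α) ≠ 0 := by
    intro h
    rw [h] at hfix_odd
    simp [Nat.odd_iff] at hfix_odd
  have : Nonempty (MulAction.fixedPoints P2 α) :=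
    (Nat.card_pos_iff.mp (Nat.pos_of_ne_zero hne)).1
  obtain ⟨⟨a, ha⟩⟩ := this
  refine ⟨a, ?_⟩
  have := ha (⟨σ, Subgroup.mem_zpowers σ⟩ : P2)
  rw [hsmul] at this
  exact this


lemma aux_exists_sylow_map_eq {G : Type*} [Group G] [Finite G] (O : Subgroup G) [O.Normal]
    {p : ℕ} [Fact p.Prime] (P' : Sylow p (G ⧸ O)) :
    ∃ P₀ : Sylow p G,
      (P₀ : Subgroup G).map (QuotientGroup.mk' O) = (P' : Subgroup (G ⧸ O)) := by
  obtain ⟨P₁⟩ := (inferInstance : Nonempty (Sylow p G))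
  let M : Sylow p (G ⧸ O) := P₁.mapSurjective (QuotientGroup.mk'_surjective O)
  obtain ⟨ξ, hξ⟩ := MulAction.exists_smul_eq (G ⧸ O) M P'
  obtain ⟨c, rfl⟩ := QuotientGroup.mk'_surjective O ξ
  refine ⟨c • P₁, ?_⟩
  have h1 : ((c • P₁ : Sylow p G) : Subgroup G) = MulAut.conj c • (P₁ : Subgroup G) :=
    Sylow.coe_subgroup_smul
  have h2 : (P₁ : Subgroup G).map (QuotientGroup.mk' O) = (M : Subgroup (G ⧸ O)) :=
    (Sylow.coe_mapSurjective _ _).symm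
  rw [h1, aux_map_conj_smul, h2, ← Sylow.coe_subgroup_smul, hξ]



lemma aux_O_exists {G : Type*} [Group G] [Finite G] (h : ¬ IsPGroup 2 (frattini G)) :
    ∃ O : Subgroup G, O ≤ frattini G ∧ Odd (Nat.card O) ∧ 1 < Nat.card O ∧
      (∀ f : MulAut G, O.map f.toMonoidHom = O) := by
  classical
  rw [IsPGroup] at h
  push_neg at h
  obtain ⟨g, hg⟩ := h
  -- orderOf g has an odd prime factor q
  have hordne : orderOf g ≠ 0 := by
    have := orderOf_pos g
    omega
  obtain ⟨q, hq, hqdvd, hq2⟩ : ∃ q : ℕ, q.Prime ∧ q ∣ orderOf g ∧ q ≠ 2 := by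
    by_contra hc
    push_neg at hc
    have hb : ordCompl[2] (orderOf g) = 1 := by
      by_contra hb1
      obtain ⟨p, hp, hpdvd⟩ := Nat.exists_prime_and_dvd hb1
      have hpord : p ∣ orderOf g := hpdvd.trans (Nat.ordCompl_dvd (orderOf g) 2)
      have : p = 2 := hc p hp hpord
      subst this
      exact Nat.not_dvd_ordCompl Nat.prime_two hordne hpdvd
    have h2 : 2 ^ (orderOf g).factorization 2 = orderOf g := by
      have := Nat.ordProj_mul_ordCompl_eq_self (orderOf g) 2
      rw [hb, mul_one] at this
      exact this
    apply hg ((orderOf g).factorization 2)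
    rw [h2]
    exact pow_orderOf_eq_one g
  haveI : Fact q.Prime := ⟨hq⟩
  obtain ⟨Pq⟩ := (inferInstance : Nonempty (Sylow q (frattini G)))
  have hnil : Group.IsNilpotent (frattini G) := frattini_nilpotent
  have hnorm : (Pq : Subgroup (frattini G)).Normal := by
    have key := (isNilpotent_of_finite_tfae (G := (frattini G : Subgroup G))).out 0 3
    exact (key.mp hnil) q inferInstance Pq
  have hchar : (Pq : Subgroup (frattini G)).Characteristic := Sylow.characteristic_of_normal Pq hnorm
  refine ⟨(Pq : Subgroup (frattini G)).map (frattini G).subtype, Subgroup.map_subtype_le _, ?_, ?_, ?_⟩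
  · -- odd cardinality
    have hcard : Nat.card ((Pq : Subgroup (frattini G)).map (frattini G).subtype) = Nat.card (Pq : Subgroup (frattini G)) :=
      (Nat.card_congr (Subgroup.equivMapOfInjective _ _ (frattini G).subtype_injective).toEquiv).symm
    rw [hcard, Pq.card_eq_multiplicity]
    exact (hq.odd_of_ne_two hq2).pow
  · -- cardinality > 1
    have hcard : Nat.card ((Pq : Subgroup (frattini G)).map (frattini G).subtype) = Nat.card (Pq : Subgroup (frattini G)) :=
      (Nat.card_congr (Subgroup.equivMapOfInjective _ _ (frattini G).subtype_injective).toEquiv).symm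
    rw [hcard, Pq.card_eq_multiplicity]
    apply Nat.one_lt_pow
    · have : q ∣ Nat.card (frattini G) := hqdvd.trans (orderOf_dvd_natCard g)
      have := (Nat.Prime.factorization_pos_of_dvd hq (Nat.card_pos).ne' this)
      omega
    · exact hq.one_lt
  · -- invariance under all automorphisms
    intro f
    have hFmap : (frattini G).map f.toMonoidHom = frattini G :=
      Subgroup.characteristic_iff_map_eq.mp inferInstance f
    let f' : (frattini G) ≃* (frattini G) := (f.subgroupMap (frattini G)).trans (MulEquiv.subgroupCongr hFmap)
    have hcomm : ∀ u : (frattini G), (f' u : G) = f (u : G) := fun u => rfl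
    have hPmap : (Pq : Subgroup (frattini G)).map f'.toMonoidHom = (Pq : Subgroup (frattini G)) :=
      Subgroup.characteristic_iff_map_eq.mp hchar f'
    rw [Subgroup.map_map]
    have hhom : f.toMonoidHom.comp (frattini G).subtype = (frattini G).subtype.comp f'.toMonoidHom := by
      ext u
      exact (hcomm u).symm
    rw [hhom, ← Subgroup.map_map, hPmap]


lemma aux_quot_wreathed {G : Type*} [Group G] [Finite G] (O : Subgroup G) [O.Normal]
    (hOodd : Odd (Nat.card O)) (hW : HasWreathedSylow2 G) : HasWreathedSylow2 (G ⧸ O) := by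
  obtain ⟨n, hn, hiso⟩ := hW
  haveI : Fact (Nat.Prime 2) := ⟨Nat.prime_two⟩
  refine ⟨n, hn, fun P' => ?_⟩
  obtain ⟨P₀, hP₀⟩ := aux_exists_sylow_map_eq O P'
  set e : (P₀ : Subgroup G) →* G ⧸ O :=
    (QuotientGroup.mk' O).comp (P₀ : Subgroup G).subtype with he
  have hinj : Function.Injective e := by
    rw [← MonoidHom.ker_eq_bot_iff]
    rw [eq_bot_iff]
    intro w hw
    have hwO : (w : G) ∈ O := by
      have : e w = 1 := hw
      rw [he] at this
      simpa [QuotientGroup.eq_one_iff] using this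
    have h1 : orderOf (w : G) ∣ Nat.card O := Subgroup.orderOf_dvd_natCard O hwO
    have h2 : orderOf w ∣ Nat.card (P₀ : Subgroup G) := orderOf_dvd_natCard w
    rw [P₀.card_eq_multiplicity] at h2
    have h3 : orderOf (w : G) = orderOf w :=
      orderOf_injective (P₀ : Subgroup G).subtype (P₀ : Subgroup G).subtype_injective w
    have h4 : orderOf w = 1 := aux_dvd_odd_two_pow hOodd (h3 ▸ h1) h2
    have : w = 1 := orderOf_eq_one_iff.mp h4
    simp [this]
  have hrange : e.range = (P' : Subgroup (G ⧸ O)) := by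
    rw [he, MonoidHom.range_comp, Subgroup.range_subtype, hP₀]
  obtain ⟨w⟩ := hiso P₀
  exact ⟨((MulEquiv.subgroupCongr hrange).symm.trans
    (MonoidHom.ofInjective hinj).symm).trans w⟩

end AuxLemmas

/-- In a minimal counterexample, the Frattini subgroup is a 2-group. -/
theorem minimal_counterexample_frattini_two_group
    (G : Type) [Group G] [Finite G]
    (hW : HasWreathedSylow2 G)
    (φ : MulAut G) (hcp : IsClassPreserving φ) (hcol : IsColeman φ)
    (hord : ∃ k : ℕ, orderOf φ = 2 ^ k) (hni : φ ∉ innAut G)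
    (hmin : ∀ (H : Type) [Group H] [Finite H], Nat.card H < Nat.card G →
      HasWreathedSylow2 H → Odd (Nat.card ↥(outC H ⊓ outCol H))) :
    IsPGroup 2 (frattini G) := by
  classical
  by_contra hcontra
  obtain ⟨O, hOle, hOodd, hOcard, hOmap⟩ := aux_O_exists hcontra
  haveI hON : O.Normal := by
    constructor
    intro x hx c
    have h1 := hOmap (MulAut.conj c)
    rw [← h1]
    exact ⟨x, hx, rfl⟩
  -- the quotient is smaller
  have hcardlt : Nat.card (G ⧸ O) < Nat.card G := by
    have h1 : Nat.card G = Nat.card (G ⧸ O) * Nat.card O :=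
      Subgroup.card_eq_card_quotient_mul_card_subgroup O
    have h2 : 0 < Nat.card (G ⧸ O) := Nat.card_pos
    nlinarith
  -- the induced automorphism of the quotient
  have hOmapφ : O.map (φ : G →* G) = O := hOmap φ
  set φb : MulAut (G ⧸ O) := QuotientGroup.congr O O (φ : MulEquiv G G) hOmapφ with hφbdef
  have hφb_mk : ∀ x : G, φb (QuotientGroup.mk x) = QuotientGroup.mk (φ x) :=
    fun x => QuotientGroup.congr_mk O O _ hOmapφ x
  have hφb_pow : ∀ (i : ℕ) (x : G), (φb ^ i) (QuotientGroup.mk x)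
      = QuotientGroup.mk ((φ ^ i) x) := by
    intro i
    induction i with
    | zero => intro x; simp
    | succ i ih =>
      intro x
      rw [pow_succ, pow_succ]
      have h1 : (φb ^ i * φb) (QuotientGroup.mk x) = (φb ^ i) (φb (QuotientGroup.mk x)) := rfl
      have h2 : ((φ ^ i * φ) x) = (φ ^ i) (φ x) := rfl
      rw [h1, h2, hφb_mk, ih]
  -- class preserving
  have hφbC : φb ∈ autC (G ⧸ O) := by
    intro ξ
    obtain ⟨x, rfl⟩ := QuotientGroup.mk_surjective ξ
    obtain ⟨c, hc⟩ := isConj_iff.mp (hcp x)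
    rw [hφb_mk]
    exact isConj_iff.mpr ⟨QuotientGroup.mk c, by rw [← hc]; simp⟩
  -- Coleman
  have hφbCol : φb ∈ autCol (G ⧸ O) := by
    intro p hp P'
    haveI : Fact p.Prime := ⟨hp⟩
    obtain ⟨P₀, hP₀⟩ := aux_exists_sylow_map_eq O P'
    obtain ⟨y, hy⟩ := hcol p hp P₀
    refine ⟨QuotientGroup.mk y, ?_⟩
    intro u' hu'
    rw [← hP₀] at hu'
    obtain ⟨u, hu, rfl⟩ := hu'
    have h1 : (QuotientGroup.mk' O) u = QuotientGroup.mk u := rfl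
    rw [h1, hφb_mk, hy u hu]
    simp
  -- the image in Out(G/O) is trivial
  have hwq : HasWreathedSylow2 (G ⧸ O) := aux_quot_wreathed O hOodd hW
  have hodd := hmin (G ⧸ O) hcardlt hwq
  obtain ⟨k, hk⟩ := hord
  have hφb2k : φb ^ (2 ^ k) = 1 := by
    apply MulEquiv.ext
    intro ξ
    obtain ⟨x, rfl⟩ := QuotientGroup.mk_surjective ξ
    rw [hφb_pow]
    have : φ ^ (2 ^ k) = 1 := by rw [← hk]; exact pow_orderOf_eq_one φ
    rw [this]
    rfl
  have hφb_inn : φb ∈ innAut (G ⧸ O) := by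
    set S := outC (G ⧸ O) ⊓ outCol (G ⧸ O) with hS
    have hmem : (QuotientGroup.mk' (innAut (G ⧸ O))) φb ∈ S := by
      constructor
      · exact ⟨φb, hφbC, rfl⟩
      · exact ⟨φb, hφbCol, rfl⟩
    set w : S := ⟨(QuotientGroup.mk' (innAut (G ⧸ O))) φb, hmem⟩ with hw
    have h1 : orderOf w ∣ Nat.card S := orderOf_dvd_natCard w
    have h2 : orderOf (S.subtype w) = orderOf w :=
      orderOf_injective S.subtype S.subtype_injective w
    have h3 : orderOf ((QuotientGroup.mk' (innAut (G ⧸ O))) φb) ∣ 2 ^ k := by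
      apply orderOf_dvd_of_pow_eq_one
      rw [← map_pow, hφb2k, map_one]
    have h3' : orderOf w ∣ 2 ^ k := by
      rw [← h2]
      exact h3
    have h4 : orderOf w = 1 := aux_dvd_odd_two_pow hodd h1 h3'
    have h4' : orderOf ((QuotientGroup.mk' (innAut (G ⧸ O))) φb) = 1 := by
      have := h2.trans h4
      exact this
    have h5 := orderOf_eq_one_iff.mp h4' 
    rwa [QuotientGroup.mk'_apply, QuotientGroup.eq_one_iff] at h5
  obtain ⟨gq, hg⟩ := hφb_inn
  obtain ⟨g, rfl⟩ := QuotientGroup.mk_surjective gq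
  -- the twisted automorphism ψ is trivial modulo O
  set ψ : MulAut G := (MulAut.conj g)⁻¹ * φ with hψdef
  have hψapp : ∀ x : G, ψ x = g⁻¹ * φ x * g := by
    intro x
    rw [hψdef]
    have : (MulAut.conj g)⁻¹ = MulAut.conj g⁻¹ := by
      rw [← map_inv MulAut.conj g]
    rw [MulAut.mul_apply, this]
    simp [MulAut.conj_apply, mul_assoc]
  have hψO : ∀ x : G, x⁻¹ * ψ x ∈ O := by
    intro x
    have h2 : (QuotientGroup.mk (ψ x) : G ⧸ O) = QuotientGroup.mk x := by
      rw [hψapp]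
      have h3 : (QuotientGroup.mk (g⁻¹ * φ x * g) : G ⧸ O)
          = (QuotientGroup.mk g)⁻¹ * QuotientGroup.mk (φ x) * QuotientGroup.mk g := by
        simp [QuotientGroup.mk_mul, QuotientGroup.mk_inv]
      rw [h3, ← hφb_mk, ← hg]
      simp only [MulAut.conj_apply]
      group
    exact (QuotientGroup.eq).mp h2.symm
  haveI : Finite (MulAut G) :=
    Finite.of_injective (fun f => (f : G → G)) DFunLike.coe_injective
  have hm0 : orderOf ψ ≠ 0 := (orderOf_pos ψ).ne'
  set v := (orderOf ψ).factorization 2 with hv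
  set b := ordCompl[2] (orderOf ψ) with hb
  set θ := ψ ^ b with hθdef
  have hθ2v : θ ^ (2 ^ v) = 1 := by
    rw [hθdef, ← pow_mul]
    have h1 : b * 2 ^ v = orderOf ψ := by
      rw [mul_comm]
      exact Nat.ordProj_mul_ordCompl_eq_self (orderOf ψ) 2
    rw [h1]
    exact pow_orderOf_eq_one ψ
  have hpowO : ∀ (i : ℕ) (x : G), x⁻¹ * (ψ ^ i) x ∈ O := by
    intro i
    induction i with
    | zero => intro x; simpa using one_mem O
    | succ i ih =>
      intro x
      have h1 : (ψ ^ (i + 1)) x = (ψ ^ i) (ψ x) := by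
        rw [pow_succ]; rfl
      rw [h1]
      have h2 : x⁻¹ * (ψ ^ i) (ψ x) = (x⁻¹ * ψ x) * ((ψ x)⁻¹ * (ψ ^ i) (ψ x)) := by group
      rw [h2]
      exact mul_mem (hψO x) (ih (ψ x))
  have hθO : ∀ x : G, x⁻¹ * θ x ∈ O := fun x => hpowO b x
  have hθOmem : ∀ o : O, θ (o : G) ∈ O := by
    intro o
    have h1 := hθO (o : G)
    have h2 : θ (o : G) = (o : G) * ((o : G)⁻¹ * θ (o : G)) := by group
    rw [h2]
    exact mul_mem o.2 h1
  set C : Subgroup G :=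
    { carrier := {x : G | θ x = x}
      one_mem' := map_one θ
      mul_mem' := by
        intro y z hy hz
        simp only [Set.mem_setOf_eq] at *
        rw [map_mul, hy, hz]
      inv_mem' := by
        intro a ha
        simp only [Set.mem_setOf_eq] at *
        rw [map_inv, ha] } with hCdef
  have hCO : C ⊔ O = ⊤ := by
    rw [eq_top_iff]
    intro x _
    set fmap : O → O := fun o => ⟨x⁻¹ * θ x * θ (o : G), mul_mem (hθO x) (hθOmem o)⟩
      with hfmap
    have hiterval : ∀ (i : ℕ) (a : O),
        ((fmap^[i]) a : G) = x⁻¹ * (θ ^ i) x * (θ ^ i) (a : G) := by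
      intro i
      induction i with
      | zero => intro a; simp
      | succ i ih =>
        intro a
        rw [Function.iterate_succ_apply']
        show x⁻¹ * θ x * θ (((fmap^[i]) a : G)) = _
        rw [ih a]
        have h1 : ∀ y : G, θ ((θ ^ i) y) = (θ ^ (i + 1)) y := by
          intro y
          rw [pow_succ']
          rfl
        rw [map_mul, map_mul, map_inv, h1 x, h1 (a : G)]
        group
    have hiter : ∀ a : O, (fmap^[2 ^ v]) a = a := by
      intro a
      apply Subtype.ext
      rw [hiterval (2 ^ v) a, hθ2v]
      show x⁻¹ * ((1 : MulAut G) x) * ((1 : MulAut G) (a : G)) = (a : G)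
      simp
    obtain ⟨o, ho⟩ := aux_fixed_point hOodd fmap v hiter
    have hval : x⁻¹ * θ x * θ (o : G) = (o : G) := congrArg Subtype.val ho
    have hofix : (x * (o : G)) ∈ C := by
      show θ (x * (o : G)) = x * (o : G)
      rw [map_mul]
      have h2 : θ x * θ (o : G) = x * (x⁻¹ * θ x * θ (o : G)) := by group
      rw [h2, hval]
    have hxeq : x = (x * (o : G)) * (o : G)⁻¹ := by group
    rw [hxeq]
    exact mul_mem ((le_sup_left : C ≤ C ⊔ O) hofix)
      ((le_sup_right : O ≤ C ⊔ O) (inv_mem o.2))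
  have hCtop : C = ⊤ := by
    apply frattini_nongenerating
    rw [eq_top_iff, ← hCO]
    exact sup_le_sup_left hOle C
  have hθ1 : ψ ^ b = 1 := by
    rw [← hθdef]
    apply MulEquiv.ext
    intro x
    have hx : x ∈ C := hCtop ▸ Subgroup.mem_top x
    exact hx
  have hbodd : Odd b := by
    rw [Nat.odd_iff]
    have h1 : ¬ 2 ∣ b := Nat.not_dvd_ordCompl Nat.prime_two hm0
    omega
  have hψdvd : orderOf ψ ∣ b := orderOf_dvd_of_pow_eq_one hθ1
  have hψodd : Odd (orderOf ψ) := by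
    rw [Nat.odd_iff]
    have h1 : ¬ 2 ∣ orderOf ψ := by
      intro hdvd
      rw [Nat.odd_iff] at hbodd
      have := hdvd.trans hψdvd
      omega
    omega
  have heq : (QuotientGroup.mk' (innAut G)) ψ = (QuotientGroup.mk' (innAut G)) φ := by
    rw [hψdef, map_mul, map_inv]
    have h1 : (QuotientGroup.mk' (innAut G)) (MulAut.conj g) = 1 := by
      rw [QuotientGroup.mk'_apply, QuotientGroup.eq_one_iff]
      exact ⟨g, rfl⟩
    rw [h1]
    simp
  have h1 : orderOf ((QuotientGroup.mk' (innAut G)) φ) ∣ orderOf ψ := by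
    rw [← heq]
    exact orderOf_map_dvd _ ψ
  have h2 : orderOf ((QuotientGroup.mk' (innAut G)) φ) ∣ 2 ^ k := by
    have := orderOf_map_dvd (QuotientGroup.mk' (innAut G)) φ
    rwa [hk] at this
  have hfinal : orderOf ((QuotientGroup.mk' (innAut G)) φ) = 1 :=
    aux_dvd_odd_two_pow hψodd h1 h2
  have hinner : φ ∈ innAut G := by
    have h3 := orderOf_eq_one_iff.mp hfinal
    rwa [QuotientGroup.mk'_apply, QuotientGroup.eq_one_iff] at h3
  exact hni hinner
end
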